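/- Let S₁, S₂ ⊆ T be subspaces, each satisfying (dim Sᵢ ≤ dim T − p or Sᵢ = T), and let ω₁, ω₂ ∈ ⋀^{p+1} T*. If the two subspaces {(X, ι_X ω₁ + α) : X ∈ S₁, α ∈ ⋀^p S₁°} and {(X, ι_X ω₂ + α) : X ∈ S₂, α ∈ ⋀^p S₂°} of E^p are equal, then S₁ = S₂ and ω₁(X, Y, v₁, …, v_{p−1}) = ω₂(X, Y, v₁, …, v_{p−1}) for all X, Y ∈ S₁ and all v₁, …, v_{p−1} ∈ T. -/
import Mathlib


open Module

/-- `E^p` for `p = q+1`: the vector space `T ⊕ ⋀^{q+1} T*`. -/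
abbrev EP (T : Type) [AddCommGroup T] [Module ℝ T] (q : ℕ) :=
  T × (T [⋀^Fin (q+1)]→ₗ[ℝ] ℝ)

variable {T : Type} [AddCommGroup T] [Module ℝ T]

/-- The `⋀^q T*`-valued pairing on `E^{q+1}`: `⟨(X,α),(Y,β)⟩ = ι_X β + ι_Y α`. -/
noncomputable def pairing {q : ℕ} (e₁ e₂ : EP T q) : T [⋀^Fin q]→ₗ[ℝ] ℝ :=
  e₂.2.curryLeft e₁.1 + e₁.2.curryLeft e₂.1

def orthSet {q : ℕ} (L : Set (EP T q)) : Set (EP T q) :=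
  {e | ∀ l ∈ L, pairing e l = 0}

def IsIsotropic {q : ℕ} (L : Set (EP T q)) : Prop :=
  ∀ e₁ ∈ L, ∀ e₂ ∈ L, pairing e₁ e₂ = 0

theorem stmt4 [FiniteDimensional ℝ T] (q : ℕ) (hq : q + 1 ≤ finrank ℝ T)
    (S₁ S₂ : Submodule ℝ T)
    (hS₁ : finrank ℝ S₁ ≤ finrank ℝ T - (q+1) ∨ S₁ = ⊤)
    (hS₂ : finrank ℝ S₂ ≤ finrank ℝ T - (q+1) ∨ S₂ = ⊤)
    (ω₁ ω₂ : T [⋀^Fin (q+2)]→ₗ[ℝ] ℝ)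
    (heq : {e : EP T q | ∃ X ∈ S₁, ∃ α : T [⋀^Fin (q+1)]→ₗ[ℝ] ℝ,
        (∀ Z ∈ S₁, α.curryLeft Z = 0) ∧ e = (X, ω₁.curryLeft X + α)} =
      {e : EP T q | ∃ X ∈ S₂, ∃ α : T [⋀^Fin (q+1)]→ₗ[ℝ] ℝ,
        (∀ Z ∈ S₂, α.curryLeft Z = 0) ∧ e = (X, ω₂.curryLeft X + α)}) :
    S₁ = S₂ ∧
    ∀ X ∈ S₁, ∀ Y ∈ S₁, ∀ v : Fin q → T,
      ((ω₁.curryLeft X).curryLeft Y) v = ((ω₂.curryLeft X).curryLeft Y) v := by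
  have key : ∀ X ∈ S₁, ∃ α : T [⋀^Fin (q+1)]→ₗ[ℝ] ℝ,
      (∀ Z ∈ S₂, α.curryLeft Z = 0) ∧ X ∈ S₂ ∧
      ω₁.curryLeft X = ω₂.curryLeft X + α := by
    intro X hX
    have hmem : (X, ω₁.curryLeft X + 0) ∈ {e : EP T q | ∃ X ∈ S₁,
        ∃ α : T [⋀^Fin (q+1)]→ₗ[ℝ] ℝ,
        (∀ Z ∈ S₁, α.curryLeft Z = 0) ∧ e = (X, ω₁.curryLeft X + α)} :=
      ⟨X, hX, 0, fun Z _ => by simp, rfl⟩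
    rw [heq] at hmem
    obtain ⟨X', hX', α, hα, he⟩ := hmem
    obtain ⟨h1, h2⟩ := Prod.mk.injEq .. ▸ he
    subst h1
    exact ⟨α, hα, hX', by simpa using h2⟩
  have key' : ∀ X ∈ S₂, ∃ α : T [⋀^Fin (q+1)]→ₗ[ℝ] ℝ,
      (∀ Z ∈ S₁, α.curryLeft Z = 0) ∧ X ∈ S₁ ∧
      ω₂.curryLeft X = ω₁.curryLeft X + α := by
    intro X hX
    have hmem : (X, ω₂.curryLeft X + 0) ∈ {e : EP T q | ∃ X ∈ S₂,
        ∃ α : T [⋀^Fin (q+1)]→ₗ[ℝ] ℝ,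
        (∀ Z ∈ S₂, α.curryLeft Z = 0) ∧ e = (X, ω₂.curryLeft X + α)} :=
      ⟨X, hX, 0, fun Z _ => by simp, rfl⟩
    rw [← heq] at hmem
    obtain ⟨X', hX', α, hα, he⟩ := hmem
    obtain ⟨h1, h2⟩ := Prod.mk.injEq .. ▸ he
    subst h1
    exact ⟨α, hα, hX', by simpa using h2⟩
  have hSS : S₁ = S₂ := by
    ext x
    constructor
    · intro hx; exact (key x hx).choose_spec.2.1
    · intro hx; exact (key' x hx).choose_spec.2.1
  refine ⟨hSS, fun X hX Y hY v => ?_⟩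
  obtain ⟨α, hα, -, hω⟩ := key X hX
  have hY2 : Y ∈ S₂ := hSS ▸ hY
  have := congrArg (fun f => (AlternatingMap.curryLeft f Y) v) hω
  simpa [hα Y hY2] using this
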